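/- Let a be a positive integer, x real, and \lambda_m = \sum_{l=0}^{m} S(l+a,a) x^{m-l} C(m,l) C(l+a,a)^{-1} for m >= 1. Then for n >= k >= 0, the partial Bell polynomial satisfies B_{n,k}(\lambda_1, ..., \lambda_{n-k+1}) = (1/k!) \sum_{r=0}^{k} (-1)^{k-r} C(k,r) \sum_{l=0}^{n} S(l+ar, ar) (rx)^{n-l} C(n,l) C(l+ar, ar)^{-1}. -/

import Mathlib

open Finset PowerSeries

/-- Stirling numbers of the second kind. -/
def stirling2 : ℕ → ℕ → ℕ
  | 0, 0 => 1
  | 0, _ + 1 => 0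
  | _ + 1, 0 => 0
  | n + 1, k + 1 => (k + 1) * stirling2 n (k + 1) + stirling2 n k

/-- Partial Bell polynomial `B_{n,k}(x 1, x 2, ...)`, summing over sequences
`ℓ` of nonnegative integers with `∑ i * ℓ i = n` and `∑ ℓ i = k`. -/
noncomputable def bellPoly (n k : ℕ) (x : ℕ → ℝ) : ℝ :=
  ∑ ℓ ∈ (Fintype.piFinset fun _ : Fin n => Finset.range (n + 1)).filter
      (fun ℓ => (∑ i, (i.1 + 1) * ℓ i) = n ∧ (∑ i, ℓ i) = k),
    ((n.factorial : ℝ) / ∏ i, ((ℓ i).factorial : ℝ)) *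
      ∏ i, (x (i.1 + 1) / ((i.1 + 1).factorial : ℝ)) ^ (ℓ i)

/-- The power series `(e^t - 1)/t`, with constant term `1`. -/
noncomputable def expm1DivT : PowerSeries ℝ :=
  PowerSeries.mk fun n => 1 / ((n + 1).factorial : ℝ)

/-- The power series `e^{x t}`. -/
noncomputable def expSeries (x : ℝ) : PowerSeries ℝ :=
  PowerSeries.mk fun n => x ^ n / (n.factorial : ℝ)

/-- The generalized Bernoulli polynomial value `B_n^a(-x)`, defined via the
exponential generating function `(t/(e^t-1))^a e^{-x t}`. -/
noncomputable def genBernoulliNeg (a : ℕ) (x : ℝ) (n : ℕ) : ℝ :=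
  (n.factorial : ℝ) * PowerSeries.coeff n ((expm1DivT ^ a)⁻¹ * expSeries (-x))



lemma stirling2_succ_succ (n k : ℕ) :
    stirling2 (n+1) (k+1) = (k + 1) * stirling2 n (k + 1) + stirling2 n k := rfl

@[simp] lemma stirling2_zero_zero : stirling2 0 0 = 1 := rfl
@[simp] lemma stirling2_zero_succ (k : ℕ) : stirling2 0 (k+1) = 0 := rfl
@[simp] lemma stirling2_succ_zero (n : ℕ) : stirling2 (n+1) 0 = 0 := rfl

lemma stirling2_eq_zero_of_lt : ∀ {n k : ℕ}, n < k → stirling2 n k = 0 := by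
  intro n
  induction n with
  | zero => intro k hk; cases k; omega; rfl
  | succ n ih =>
    intro k hk
    cases k with
    | zero => omega
    | succ k => rw [stirling2_succ_succ, ih (by omega), ih (by omega)]; simp

@[simp] lemma stirling2_self (n : ℕ) : stirling2 n n = 1 := by
  induction n with
  | zero => rfl
  | succ n ih =>
    rw [stirling2_succ_succ, ih, stirling2_eq_zero_of_lt (by omega)]; simp

@[simp] lemma stirling2_one (n : ℕ) : stirling2 (n+1) 1 = 1 := by
  induction n with
  | zero => rfl
  | succ n ih => rw [stirling2_succ_succ, ih]; cases n <;> simp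

lemma stirling2_classic (n k : ℕ) :
    stirling2 (n+1) (k+1) = ∑ j ∈ range (n+1), n.choose j * stirling2 j k := by
  induction n generalizing k with
  | zero => simp [stirling2_succ_succ]
  | succ n ih =>
    rw [Finset.sum_range_succ' _ (n+1)]
    cases k with
    | zero => simp
    | succ k =>
      have A := ih (k+1)
      have B := ih k
      have hC : ∑ j ∈ range (n+1), n.choose (j+1) * stirling2 (j+1) (k+1)
          = ∑ j ∈ range (n+1), n.choose j * stirling2 j (k+1) := by
        have := Finset.sum_range_succ' (fun j => n.choose j * stirling2 j (k+1)) (n+1)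
        rw [Finset.sum_range_succ (fun j => n.choose j * stirling2 j (k+1)) (n+1)] at this
        simpa [Nat.choose_succ_self] using this.symm
      have expand : ∀ j, (n+1).choose (j+1) * stirling2 (j+1) (k+1)
          = (k+1) * (n.choose j * stirling2 j (k+1)) + n.choose j * stirling2 j k
            + n.choose (j+1) * stirling2 (j+1) (k+1) := by
        intro j
        rw [Nat.choose_succ_succ, stirling2_succ_succ]
        ring
      rw [Finset.sum_congr rfl (fun j _ => expand j)]
      rw [Finset.sum_add_distrib, Finset.sum_add_distrib, hC, ← Finset.mul_sum, ← A, ← B]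
      rw [stirling2_succ_succ (n+1) (k+1)]
      simp only [Nat.choose_zero_right, stirling2_zero_succ, mul_zero, one_mul, add_zero]
      ring




lemma stirling2_conv (n a : ℕ) :
    (a+1) * stirling2 n (a+1) = ∑ j ∈ range n, n.choose j * stirling2 j a := by
  have h := stirling2_classic n a
  rw [Finset.sum_range_succ, Nat.choose_self, one_mul, stirling2_succ_succ] at h
  omega

lemma coeff_expm1_pow (a n : ℕ) :
    coeff n ((PowerSeries.exp ℝ - 1)^a)
      = (a.factorial : ℝ) * stirling2 n a / (n.factorial : ℝ) := by
  induction a generalizing n with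
  | zero =>
    rw [pow_zero, coeff_one]
    cases n <;> simp
  | succ a ih =>
    rw [pow_succ, coeff_mul, Finset.Nat.sum_antidiagonal_eq_sum_range_succ_mk,
      Finset.sum_range_succ]
    have h0 : coeff 0 (PowerSeries.exp ℝ - 1) = 0 := by simp
    rw [Nat.sub_self, h0, mul_zero, add_zero]
    have key : (((a+1).factorial : ℝ)) * stirling2 n (a+1) / n.factorial
        = ∑ i ∈ range n, (a.factorial : ℝ) * (n.choose i) * stirling2 i a / n.factorial := by
      have hc : ((a:ℝ)+1) * stirling2 n (a+1) = ∑ j ∈ range n, (n.choose j : ℝ) * stirling2 j a := by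
        exact_mod_cast congrArg (Nat.cast : ℕ → ℝ) (stirling2_conv n a)
      calc ((a+1).factorial : ℝ) * stirling2 n (a+1) / n.factorial
          = (a.factorial : ℝ) * (((a:ℝ)+1) * stirling2 n (a+1)) / n.factorial := by
            rw [Nat.factorial_succ]; push_cast; ring
        _ = (a.factorial : ℝ) * (∑ j ∈ range n, (n.choose j : ℝ) * stirling2 j a) / n.factorial := by
            rw [hc]
        _ = _ := by rw [Finset.mul_sum, Finset.sum_div]; exact Finset.sum_congr rfl fun i _ => by ring
    rw [key]
    apply Finset.sum_congr rfl
    intro i hi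
    rw [Finset.mem_range] at hi
    rw [ih]
    have hsub : coeff (n - i) (PowerSeries.exp ℝ - 1) = 1 / ((n-i).factorial : ℝ) := by
      rw [map_sub, coeff_exp, coeff_one, if_neg (by omega)]
      simp
    rw [hsub, Nat.cast_choose ℝ (le_of_lt hi)]
    have f1 : (i.factorial : ℝ) ≠ 0 := Nat.cast_ne_zero.mpr (Nat.factorial_ne_zero _)
    have f2 : ((n-i).factorial : ℝ) ≠ 0 := Nat.cast_ne_zero.mpr (Nat.factorial_ne_zero _)
    have f3 : ((n).factorial : ℝ) ≠ 0 := Nat.cast_ne_zero.mpr (Nat.factorial_ne_zero _)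
    field_simp



lemma exp_sub_one_eq : PowerSeries.exp ℝ - 1 = X * expm1DivT := by
  ext n
  cases n with
  | zero => simp [expm1DivT]
  | succ n =>
    rw [coeff_succ_X_mul]
    simp [expm1DivT, Nat.factorial_succ]

lemma coeff_expm1DivT_pow (a n : ℕ) :
    coeff n (expm1DivT ^ a)
      = (a.factorial : ℝ) * stirling2 (n + a) a / ((n + a).factorial : ℝ) := by
  have h : coeff (n + a) ((PowerSeries.exp ℝ - 1) ^ a) = coeff n (expm1DivT ^ a) := by
    rw [exp_sub_one_eq, mul_pow, coeff_X_pow_mul' (expm1DivT ^ a) a (n+a),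
      if_pos (Nat.le_add_left a n)]
    have : n + a - a = n := by omega
    rw [this]
  rw [← h, coeff_expm1_pow]

lemma expSeries_eq_rescale (x : ℝ) : expSeries x = rescale x (PowerSeries.exp ℝ) := by
  ext n
  rw [coeff_rescale, coeff_exp]
  simp [expSeries]
  rw [div_eq_mul_inv]

lemma expSeries_mul (x y : ℝ) : expSeries x * expSeries y = expSeries (x + y) := by
  rw [expSeries_eq_rescale, expSeries_eq_rescale, expSeries_eq_rescale,
    PowerSeries.exp_mul_exp_eq_exp_add]

lemma expSeries_zero : expSeries 0 = 1 := by
  ext n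
  cases n with
  | zero => simp [expSeries]
  | succ n => simp [expSeries, coeff_one]

lemma expSeries_pow (x : ℝ) (r : ℕ) : (expSeries x) ^ r = expSeries (r * x) := by
  induction r with
  | zero => simp [expSeries_zero]
  | succ r ih =>
    rw [pow_succ, ih, expSeries_mul]
    push_cast; ring_nf



lemma lambda_eq (a m : ℕ) (x : ℝ) :
    (∑ l ∈ Finset.range (m + 1),
        (stirling2 (l + a) a : ℝ) * x ^ (m - l) * (m.choose l : ℝ) *
          ((l + a).choose a : ℝ)⁻¹)
      = (m.factorial : ℝ) * coeff m (expm1DivT ^ a * expSeries x) := by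
  rw [coeff_mul, Finset.Nat.sum_antidiagonal_eq_sum_range_succ_mk, Finset.mul_sum]
  apply Finset.sum_congr rfl
  intro l hl
  rw [Finset.mem_range] at hl
  rw [coeff_expm1DivT_pow]
  simp only [expSeries, coeff_mk]
  rw [Nat.cast_choose ℝ (show l ≤ m by omega),
    Nat.cast_choose ℝ (show a ≤ l + a from Nat.le_add_left a l)]
  have e1 : l + a - a = l := by omega
  rw [e1]
  have f1 : (l.factorial : ℝ) ≠ 0 := Nat.cast_ne_zero.mpr (Nat.factorial_ne_zero _)
  have f2 : ((m - l).factorial : ℝ) ≠ 0 := Nat.cast_ne_zero.mpr (Nat.factorial_ne_zero _)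
  have f3 : (m.factorial : ℝ) ≠ 0 := Nat.cast_ne_zero.mpr (Nat.factorial_ne_zero _)
  have f4 : (a.factorial : ℝ) ≠ 0 := Nat.cast_ne_zero.mpr (Nat.factorial_ne_zero _)
  have f5 : ((l + a).factorial : ℝ) ≠ 0 := Nat.cast_ne_zero.mpr (Nat.factorial_ne_zero _)
  field_simp



lemma bell_eq_coeff (n k : ℕ) (g : PowerSeries ℝ) (hg : constantCoeff g = 0) :
    bellPoly n k (fun m => (m.factorial : ℝ) * coeff m g)
      = (n.factorial : ℝ) / (k.factorial : ℝ) * coeff n (g ^ k) := by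
  set a : ℕ → ℝ := fun m => coeff m g with ha
  set g' : PowerSeries ℝ := ∑ i : Fin n, C (a (i.1+1)) * X^(i.1+1) with hg'
  have hcoeff : ∀ m, m ≤ n → coeff m g' = coeff m g := by
    intro m hm
    rw [hg', map_sum]
    simp only [coeff_C_mul, coeff_X_pow]
    cases m with
    | zero =>
      rw [Finset.sum_eq_zero (fun i _ => by rw [if_neg (by omega), mul_zero])]
      have : coeff 0 g = 0 := by rw [coeff_zero_eq_constantCoeff_apply, hg]
      rw [this]
    | succ j =>
      rw [Finset.sum_eq_single (⟨j, by omega⟩ : Fin n)]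
      · simp [ha]
      · intro b _ hb
        rw [if_neg, mul_zero]
        intro hEq
        apply hb
        have hbj : (b : ℕ) = j := by omega
        exact Fin.ext (by simp [hbj])
      · simp
  have hpow : coeff n (g ^ k) = coeff n (g' ^ k) := by
    have h1 : (X : PowerSeries ℝ)^(n+1) ∣ g - g' := by
      rw [X_pow_dvd_iff]
      intro m hm
      rw [map_sub, hcoeff m (by omega), sub_self]
    have h2 := h1.trans (sub_dvd_pow_sub_pow g g' k)
    rw [X_pow_dvd_iff] at h2
    have := h2 n (by omega)
    rw [map_sub, sub_eq_zero] at this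
    exact this
  have hterm : ∀ ℓ : Fin n → ℕ,
      coeff n ((Nat.multinomial univ ℓ : PowerSeries ℝ) *
          ∏ i : Fin n, (C (a (i.1+1)) * X^(i.1+1)) ^ ℓ i)
        = ((Nat.multinomial univ ℓ : ℝ) * ∏ i : Fin n, (a (i.1+1)) ^ ℓ i) *
            (if n = (∑ i : Fin n, (i.1+1) * ℓ i) then 1 else 0) := by
    intro ℓ
    have hp : ∏ i : Fin n, (C (a (i.1+1)) * X^(i.1+1)) ^ ℓ i
        = C (∏ i : Fin n, (a (i.1+1)) ^ ℓ i) * X ^ (∑ i : Fin n, (i.1+1) * ℓ i) := by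
      rw [map_prod, ← Finset.prod_pow_eq_pow_sum, ← Finset.prod_mul_distrib]
      apply Finset.prod_congr rfl
      intro i _
      rw [mul_pow, map_pow, ← pow_mul]
    rw [hp, ← map_natCast C (Nat.multinomial univ ℓ), ← mul_assoc, ← map_mul,
      coeff_C_mul, coeff_X_pow]
  rw [hpow, hg', Finset.sum_pow_eq_sum_piAntidiag, map_sum,
    Finset.sum_congr rfl (fun ℓ _ => hterm ℓ)]
  simp_rw [mul_ite, mul_one, mul_zero]
  rw [← Finset.sum_filter]
  -- now identify index sets and terms
  rw [bellPoly]
  have hsets : (Fintype.piFinset fun _ : Fin n => Finset.range (n + 1)).filter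
      (fun ℓ => (∑ i, (i.1 + 1) * ℓ i) = n ∧ (∑ i, ℓ i) = k)
      = (Finset.piAntidiag (univ : Finset (Fin n)) k).filter
          (fun ℓ => n = ∑ i : Fin n, (i.1+1) * ℓ i) := by
    ext ℓ
    simp only [Finset.mem_filter, Fintype.mem_piFinset, Finset.mem_range, Finset.mem_piAntidiag]
    constructor
    · rintro ⟨hbd, h1, h2⟩
      exact ⟨⟨h2, fun i _ => Finset.mem_univ i⟩, h1.symm⟩
    · rintro ⟨⟨hsum, -⟩, hn⟩
      refine ⟨fun i => ?_, hn.symm, hsum⟩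
      have h1 : (i.1+1) * ℓ i ≤ ∑ j : Fin n, (j.1+1) * ℓ j :=
        Finset.single_le_sum (f := fun j : Fin n => (j.1+1) * ℓ j)
          (fun j _ => Nat.zero_le _) (Finset.mem_univ i)
      have h2 : ℓ i ≤ (i.1+1) * ℓ i := Nat.le_mul_of_pos_left _ (Nat.succ_pos _)
      omega
  rw [hsets, Finset.mul_sum]
  apply Finset.sum_congr rfl
  intro ℓ hℓ
  simp only [Finset.mem_filter, Finset.mem_piAntidiag] at hℓ
  obtain ⟨⟨hsum, -⟩, -⟩ := hℓ
  have hfe : ∀ i : Fin n, (((i.1+1).factorial : ℝ) * a (i.1+1)) / ((i.1+1).factorial : ℝ)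
      = a (i.1+1) := fun i =>
    mul_div_cancel_left₀ _ (Nat.cast_ne_zero.mpr (Nat.factorial_ne_zero _))
  simp only [ha] at hfe ⊢
  simp only [hfe]
  have hprodne : (∏ i : Fin n, ((ℓ i).factorial : ℝ)) ≠ 0 :=
    Finset.prod_ne_zero_iff.mpr fun i _ => Nat.cast_ne_zero.mpr (Nat.factorial_ne_zero _)
  have hkfac : (k.factorial : ℝ)
      = (∏ i : Fin n, ((ℓ i).factorial : ℝ)) * (Nat.multinomial univ ℓ : ℝ) := by
    rw [← hsum]
    exact_mod_cast congrArg (Nat.cast : ℕ → ℝ) (Nat.multinomial_spec univ ℓ).symm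
  have hmne : (Nat.multinomial univ ℓ : ℝ) ≠ 0 :=
    Nat.cast_ne_zero.mpr (Nat.multinomial_pos _ _).ne'
  rw [hkfac]
  field_simp



lemma bellPoly_congr (n k : ℕ) (x y : ℕ → ℝ) (h : ∀ m, 1 ≤ m → m ≤ n → x m = y m) :
    bellPoly n k x = bellPoly n k y := by
  unfold bellPoly
  apply Finset.sum_congr rfl
  intro ℓ _
  congr 1
  apply Finset.prod_congr rfl
  intro i _
  rw [h (i.1+1) (by omega) (by omega)]


/-- Evaluation of the partial Bell polynomial at `λ_m = ∑_{l=0}^m S(l+a,a) x^{m-l} C(m,l) C(l+a,a)⁻¹`. -/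
theorem bellPoly_eval (n k a : ℕ) (ha : 0 < a) (hkn : k ≤ n) (x : ℝ) :
    bellPoly n k (fun m => ∑ l ∈ Finset.range (m + 1),
        (stirling2 (l + a) a : ℝ) * x ^ (m - l) * (m.choose l : ℝ) *
          ((l + a).choose a : ℝ)⁻¹) =
      (1 / (k.factorial : ℝ)) *
        ∑ r ∈ Finset.range (k + 1),
          (-1 : ℝ) ^ (k - r) * (k.choose r : ℝ) *
            ∑ l ∈ Finset.range (n + 1),
              (stirling2 (l + a * r) (a * r) : ℝ) * ((r : ℝ) * x) ^ (n - l) *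
                (n.choose l : ℝ) * ((l + a * r).choose (a * r) : ℝ)⁻¹ := by
  set F : PowerSeries ℝ := expm1DivT ^ a * expSeries x with hF
  have hF0 : constantCoeff F = 1 := by
    rw [hF, map_mul, map_pow]
    have h1 : constantCoeff expm1DivT = 1 := by
      simp [expm1DivT, ← coeff_zero_eq_constantCoeff_apply]
    have h2 : constantCoeff (expSeries x) = 1 := by
      simp [expSeries, ← coeff_zero_eq_constantCoeff_apply]
    rw [h1, h2, one_pow, mul_one]
  -- LHS
  have hL : bellPoly n k (fun m => ∑ l ∈ Finset.range (m + 1),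
        (stirling2 (l + a) a : ℝ) * x ^ (m - l) * (m.choose l : ℝ) *
          ((l + a).choose a : ℝ)⁻¹)
      = (n.factorial : ℝ) / (k.factorial : ℝ) * coeff n ((F - 1) ^ k) := by
    rw [← bell_eq_coeff n k (F - 1) (by rw [map_sub, hF0]; simp)]
    apply bellPoly_congr
    intro m h1 _
    rw [lambda_eq, ← hF]
    congr 1
    rw [map_sub]
    have : coeff m (1 : PowerSeries ℝ) = 0 := by
      rw [coeff_one, if_neg (by omega)]
    rw [this, sub_zero]
  rw [hL]
  -- RHS
  have hR : ∀ r, expm1DivT ^ (a * r) * expSeries ((r : ℝ) * x) = F ^ r := by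
    intro r
    rw [hF, mul_pow, ← pow_mul, expSeries_pow]
  have hinner : ∀ r, (∑ l ∈ Finset.range (n + 1),
        (stirling2 (l + a * r) (a * r) : ℝ) * ((r : ℝ) * x) ^ (n - l) *
          (n.choose l : ℝ) * ((l + a * r).choose (a * r) : ℝ)⁻¹)
      = (n.factorial : ℝ) * coeff n (F ^ r) := by
    intro r
    rw [← hR r, ← lambda_eq (a * r) n ((r : ℝ) * x)]
  simp_rw [hinner]
  -- binomial expansion of (F - 1)^k
  rw [sub_pow F 1 k, map_sum]
  rw [Finset.mul_sum, Finset.mul_sum]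
  apply Finset.sum_congr rfl
  intro r hr
  rw [Finset.mem_range] at hr
  have hsign : ((-1 : ℝ)) ^ (r + k) = (-1 : ℝ) ^ (k - r) := by
    have : r + k = (k - r) + 2 * r := by omega
    rw [this, pow_add, pow_mul]
    simp
  have hrw : (-1 : ℝ⟦X⟧) ^ (r + k) * F ^ r * 1 ^ (k - r) * ((k.choose r : ℕ) : ℝ⟦X⟧)
      = C ((-1 : ℝ) ^ (r + k) * (k.choose r : ℝ)) * F ^ r := by
    rw [show ((-1 : ℝ⟦X⟧)) = C (-1) from by simp,
      ← map_pow, ← map_natCast C (k.choose r)]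
    rw [map_mul]
    ring
  rw [hrw, coeff_C_mul, hsign]
  ring
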